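/- Let α, β ∈ ℂ satisfy α² ∉ {0,1}, β² ∉ {0,1}, α² ≠ β², α²β² ≠ 1. For (X, Y) ∈ ℂ² with Y² = X(X−1)(X − (α−β)²/(αβ−1)²), X ≠ 0, and any choice of square root s of 4αβX + (α−β)², the two points (x₁, y₁), (x₂, y₂) given by x_{1,2} = αβ + (α−β)(α−β ± s)/(2X) and y_{1,2} = (αβ−1)(α−β)Y(α−β ± s)³/(8X³) both satisfy y² = x(x−1)(x−α²)(x−β²)(x−α²β²), and moreover x₁ x₂ = α²β² and (α−β)²x₁/(x₁−αβ)² = X. -/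

import Mathlib

set_option maxHeartbeats 4000000 in
theorem stmt_7 (α β X Y s : ℂ)
    (hα0 : α^2 ≠ 0) (hα1 : α^2 ≠ 1) (hβ0 : β^2 ≠ 0) (hβ1 : β^2 ≠ 1)
    (hαβ : α^2 ≠ β^2) (hαβ1 : α^2 * β^2 ≠ 1)
    (hE : Y^2 = X * (X - 1) * (X - (α - β)^2 / (α * β - 1)^2))
    (hX : X ≠ 0)
    (hs : s^2 = 4 * (α * β) * X + (α - β)^2) :
    (let x₁ := α * β + (α - β) * (α - β + s) / (2 * X);
     let y₁ := (α * β - 1) * (α - β) * Y * (α - β + s)^3 / (8 * X^3);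
     let x₂ := α * β + (α - β) * (α - β - s) / (2 * X);
     let y₂ := (α * β - 1) * (α - β) * Y * (α - β - s)^3 / (8 * X^3);
     y₁^2 = x₁ * (x₁ - 1) * (x₁ - α^2) * (x₁ - β^2) * (x₁ - α^2 * β^2) ∧
     y₂^2 = x₂ * (x₂ - 1) * (x₂ - α^2) * (x₂ - β^2) * (x₂ - α^2 * β^2) ∧
     x₁ * x₂ = α^2 * β^2 ∧
     (α - β)^2 * x₁ / (x₁ - α * β)^2 = X) := by
  have h1 : α * β - 1 ≠ 0 := by
    intro h; apply hαβ1
    have h2 : α * β = 1 := by linear_combination h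
    linear_combination (α*β+1) * h2
  have hE' : Y^2 * (α*β-1)^2 = X * (X-1) * (X * (α*β-1)^2 - (α-β)^2) := by
    rw [hE]; field_simp
  have hab : α * β ≠ 0 := by
    intro h
    rcases mul_eq_zero.mp h with h' | h'
    · exact hα0 (by rw [h']; ring)
    · exact hβ0 (by rw [h']; ring)
  have hps : α - β + s ≠ 0 := by
    intro h
    have hs' : s = -(α - β) := by linear_combination h
    have : (4:ℂ) * (α*β) * X = 0 := by
      have := hs; rw [hs'] at this; linear_combination -this
    rcases mul_eq_zero.mp this with h' | h'
    · rcases mul_eq_zero.mp h' with h'' | h''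
      · norm_num at h''
      · exact hab h''
    · exact hX h'
  intro x₁ y₁ x₂ y₂
  refine ⟨?_, ?_, ?_, ?_⟩
  · show ((α * β - 1) * (α - β) * Y * (α - β + s)^3 / (8 * X^3))^2
      = x₁ * (x₁ - 1) * (x₁ - α^2) * (x₁ - β^2) * (x₁ - α^2 * β^2)
    simp only [x₁]
    field_simp
    rw [← mul_right_inj' (pow_ne_zero 5 hX)]
    linear_combination ((α-β)*(α-β+s)^3)^2*(2*X)^5 * hE' + ((-32)*β^2*X^7*s^4 + 32*β^2*X^8*s^4 + 192*β^3*X^7*s^3 + (-192)*β^3*X^8*s^3 + 32*β^4*X^6*s^4 + (-384)*β^4*X^7*s^2 + (-32)*β^4*X^7*s^4 + 512*β^4*X^8*s^2 + (-128)*β^5*X^6*s^3 + 320*β^5*X^7*s + 192*β^5*X^7*s^3 + (-576)*β^5*X^8*s + 192*β^6*X^6*s^2 + (-96)*β^6*X^7 + (-384)*β^6*X^7*s^2 + 224*β^6*X^8 + (-128)*β^7*X^6*s + 320*β^7*X^7*s + 32*β^8*X^6 + (-96)*β^8*X^7 + 64*α*β*X^7*s^4 + (-64)*α*β*X^8*s^4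 + (-576)*α*β^2*X^7*s^3 + 576*α*β^2*X^8*s^3 + (-128)*α*β^3*X^6*s^4 + 1536*α*β^3*X^7*s^2 + 192*α*β^3*X^7*s^4 + (-2176)*α*β^3*X^8*s^2 + (-64)*α*β^3*X^8*s^4 + 128*α*β^3*X^9*s^2 + 640*α*β^4*X^6*s^3 + (-1600)*α*β^4*X^7*s + (-1344)*α*β^4*X^7*s^3 + 3136*α*β^4*X^8*s + 384*α*β^4*X^8*s^3 + (-768)*α*β^4*X^9*s + (-1152)*α*β^5*X^6*s^2 + 576*α*β^5*X^7 + 3072*α*β^5*X^7*s^2 + (-1472)*α*β^5*X^8 + (-1152)*α*β^5*X^8*s^2 + 640*α*β^5*X^9 + 896*α*β^6*X^6*s + (-2880)*α*β^6*X^7*s + 1408*α*β^6*X^8*s + (-256)*α*β^7*X^6 + 960*α*β^7*X^7 + (-576)*α*β^7*X^8 + (-32)*α^2*X^7*s^4 + 32*α^2*X^8*s^4 + 576*α^2*β*X^7*s^3 + (-576)*α^2*β*X^8*s^3 + 192*α^2*β^2*X^6*s^4 + (-2304)*α^2*β^2*X^7*s^2 + (-320)*α^2*β^2*X^7*s^4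 + 3328*α^2*β^2*X^8*s^2 + 128*α^2*β^2*X^8*s^4 + (-256)*α^2*β^2*X^9*s^2 + (-1280)*α^2*β^3*X^6*s^3 + 3200*α^2*β^3*X^7*s + 3072*α^2*β^3*X^7*s^3 + (-6528)*α^2*β^3*X^8*s + (-1152)*α^2*β^3*X^8*s^3 + 2304*α^2*β^3*X^9*s + 2880*α^2*β^4*X^6*s^2 + (-1440)*α^2*β^4*X^7 + (-8832)*α^2*β^4*X^7*s^2 + (-32)*α^2*β^4*X^7*s^4 + 3872*α^2*β^4*X^8 + 4864*α^2*β^4*X^8*s^2 + 32*α^2*β^4*X^8*s^4 + (-2560)*α^2*β^4*X^9 + (-256)*α^2*β^4*X^9*s^2 + 512*α^2*β^4*X^10 + (-2688)*α^2*β^5*X^6*s + 9920*α^2*β^5*X^7*s + 192*α^2*β^5*X^7*s^3 + (-7552)*α^2*β^5*X^8*s + (-192)*α^2*β^5*X^8*s^3 + 1536*α^2*β^5*X^9*s + 896*α^2*β^6*X^6 + (-3840)*α^2*β^6*X^7 + (-384)*α^2*β^6*X^7*s^2 + 3712*α^2*β^6*X^8 + 512*α^2*β^6*X^8*s^2 +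 (-1280)*α^2*β^6*X^9 + 320*α^2*β^7*X^7*s + (-576)*α^2*β^7*X^8*s + (-96)*α^2*β^8*X^7 + 224*α^2*β^8*X^8 + (-192)*α^3*X^7*s^3 + 192*α^3*X^8*s^3 + (-128)*α^3*β*X^6*s^4 + 1536*α^3*β*X^7*s^2 + 192*α^3*β*X^7*s^4 + (-2176)*α^3*β*X^8*s^2 + (-64)*α^3*β*X^8*s^4 + 128*α^3*β*X^9*s^2 + 1280*α^3*β^2*X^6*s^3 + (-3200)*α^3*β^2*X^7*s + (-3072)*α^3*β^2*X^7*s^3 + 6528*α^3*β^2*X^8*s + 1152*α^3*β^2*X^8*s^3 + (-2304)*α^3*β^2*X^9*s + (-3840)*α^3*β^3*X^6*s^2 + 1920*α^3*β^3*X^7 + 12288*α^3*β^3*X^7*s^2 + 64*α^3*β^3*X^7*s^4 + (-5248)*α^3*β^3*X^8 + (-7424)*α^3*β^3*X^8*s^2 + (-64)*α^3*β^3*X^8*s^4 + 3840*α^3*β^3*X^9 + 512*α^3*β^3*X^9*s^2 + (-1024)*α^3*β^3*X^10 + 4480*α^3*β^4*X^6*s + (-17600)*α^3*β^4*X^7*s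 + (-576)*α^3*β^4*X^7*s^3 + 15616*α^3*β^4*X^8*s + 576*α^3*β^4*X^8*s^3 + (-4608)*α^3*β^4*X^9*s + (-1792)*α^3*β^5*X^6 + 8256*α^3*β^5*X^7 + 1536*α^3*β^5*X^7*s^2 + (-9664)*α^3*β^5*X^8 + (-2176)*α^3*β^5*X^8*s^2 + 5120*α^3*β^5*X^9 + 128*α^3*β^5*X^9*s^2 + (-1024)*α^3*β^5*X^10 + (-1600)*α^3*β^6*X^7*s + 3136*α^3*β^6*X^8*s + (-768)*α^3*β^6*X^9*s + 576*α^3*β^7*X^7 + (-1472)*α^3*β^7*X^8 + 640*α^3*β^7*X^9 + 32*α^4*X^6*s^4 + (-384)*α^4*X^7*s^2 + (-32)*α^4*X^7*s^4 + 512*α^4*X^8*s^2 + (-640)*α^4*β*X^6*s^3 + 1600*α^4*β*X^7*s + 1344*α^4*β*X^7*s^3 + (-3136)*α^4*β*X^8*s + (-384)*α^4*β*X^8*s^3 + 768*α^4*β*X^9*s + 2880*α^4*β^2*X^6*s^2 + (-1440)*α^4*β^2*X^7 + (-8832)*α^4*β^2*X^7*s^2 + (-32)*α^4*β^2*X^7*s^4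 + 3872*α^4*β^2*X^8 + 4864*α^4*β^2*X^8*s^2 + 32*α^4*β^2*X^8*s^4 + (-2560)*α^4*β^2*X^9 + (-256)*α^4*β^2*X^9*s^2 + 512*α^4*β^2*X^10 + (-4480)*α^4*β^3*X^6*s + 17600*α^4*β^3*X^7*s + 576*α^4*β^3*X^7*s^3 + (-15616)*α^4*β^3*X^8*s + (-576)*α^4*β^3*X^8*s^3 + 4608*α^4*β^3*X^9*s + 2240*α^4*β^4*X^6 + (-10560)*α^4*β^4*X^7 + (-2304)*α^4*β^4*X^7*s^2 + 13056*α^4*β^4*X^8 + 3328*α^4*β^4*X^8*s^2 + (-7680)*α^4*β^4*X^9 + (-256)*α^4*β^4*X^9*s^2 + 2048*α^4*β^4*X^10 + 3200*α^4*β^5*X^7*s + (-6528)*α^4*β^5*X^8*s + 2304*α^4*β^5*X^9*s + (-1440)*α^4*β^6*X^7 + 3872*α^4*β^6*X^8 + (-2560)*α^4*β^6*X^9 + 512*α^4*β^6*X^10 + 128*α^5*X^6*s^3 + (-320)*α^5*X^7*s + (-192)*α^5*X^7*s^3 + 576*α^5*X^8*s + (-1152)*α^5*β*X^6*s^2 +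 576*α^5*β*X^7 + 3072*α^5*β*X^7*s^2 + (-1472)*α^5*β*X^8 + (-1152)*α^5*β*X^8*s^2 + 640*α^5*β*X^9 + 2688*α^5*β^2*X^6*s + (-9920)*α^5*β^2*X^7*s + (-192)*α^5*β^2*X^7*s^3 + 7552*α^5*β^2*X^8*s + 192*α^5*β^2*X^8*s^3 + (-1536)*α^5*β^2*X^9*s + (-1792)*α^5*β^3*X^6 + 8256*α^5*β^3*X^7 + 1536*α^5*β^3*X^7*s^2 + (-9664)*α^5*β^3*X^8 + (-2176)*α^5*β^3*X^8*s^2 + 5120*α^5*β^3*X^9 + 128*α^5*β^3*X^9*s^2 + (-1024)*α^5*β^3*X^10 + (-3200)*α^5*β^4*X^7*s + 6528*α^5*β^4*X^8*s + (-2304)*α^5*β^4*X^9*s + 1920*α^5*β^5*X^7 + (-5248)*α^5*β^5*X^8 + 3840*α^5*β^5*X^9 + (-1024)*α^5*β^5*X^10 + 192*α^6*X^6*s^2 + (-96)*α^6*X^7 + (-384)*α^6*X^7*s^2 + 224*α^6*X^8 + (-896)*α^6*β*X^6*s + 2880*α^6*β*X^7*s + (-1408)*α^6*β*X^8*s + 896*α^6*β^2*X^6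 + (-3840)*α^6*β^2*X^7 + (-384)*α^6*β^2*X^7*s^2 + 3712*α^6*β^2*X^8 + 512*α^6*β^2*X^8*s^2 + (-1280)*α^6*β^2*X^9 + 1600*α^6*β^3*X^7*s + (-3136)*α^6*β^3*X^8*s + 768*α^6*β^3*X^9*s + (-1440)*α^6*β^4*X^7 + 3872*α^6*β^4*X^8 + (-2560)*α^6*β^4*X^9 + 512*α^6*β^4*X^10 + 128*α^7*X^6*s + (-320)*α^7*X^7*s + (-256)*α^7*β*X^6 + 960*α^7*β*X^7 + (-576)*α^7*β*X^8 + (-320)*α^7*β^2*X^7*s + 576*α^7*β^2*X^8*s + 576*α^7*β^3*X^7 + (-1472)*α^7*β^3*X^8 + 640*α^7*β^3*X^9 + 32*α^8*X^6 + (-96)*α^8*X^7 + (-96)*α^8*β^2*X^7 + 224*α^8*β^2*X^8) * hs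
  · show ((α * β - 1) * (α - β) * Y * (α - β - s)^3 / (8 * X^3))^2
      = x₂ * (x₂ - 1) * (x₂ - α^2) * (x₂ - β^2) * (x₂ - α^2 * β^2)
    simp only [x₂]
    field_simp
    rw [← mul_right_inj' (pow_ne_zero 5 hX)]
    linear_combination ((α-β)*(α-β-s)^3)^2*(2*X)^5 * hE' + ((-32)*β^2*X^7*s^4 + 32*β^2*X^8*s^4 + (-192)*β^3*X^7*s^3 + 192*β^3*X^8*s^3 + 32*β^4*X^6*s^4 + (-384)*β^4*X^7*s^2 + (-32)*β^4*X^7*s^4 + 512*β^4*X^8*s^2 + 128*β^5*X^6*s^3 + (-320)*β^5*X^7*s + (-192)*β^5*X^7*s^3 + 576*β^5*X^8*s + 192*β^6*X^6*s^2 + (-96)*β^6*X^7 + (-384)*β^6*X^7*s^2 + 224*β^6*X^8 + 128*β^7*X^6*s + (-320)*β^7*X^7*s + 32*β^8*X^6 + (-96)*β^8*X^7 + 64*α*β*X^7*s^4 + (-64)*α*β*X^8*s^4 + 576*α*β^2*X^7*s^3 + (-576)*α*β^2*X^8*s^3 + (-128)*α*β^3*X^6*s^4 + 1536*α*β^3*X^7*s^2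 + 192*α*β^3*X^7*s^4 + (-2176)*α*β^3*X^8*s^2 + (-64)*α*β^3*X^8*s^4 + 128*α*β^3*X^9*s^2 + (-640)*α*β^4*X^6*s^3 + 1600*α*β^4*X^7*s + 1344*α*β^4*X^7*s^3 + (-3136)*α*β^4*X^8*s + (-384)*α*β^4*X^8*s^3 + 768*α*β^4*X^9*s + (-1152)*α*β^5*X^6*s^2 + 576*α*β^5*X^7 + 3072*α*β^5*X^7*s^2 + (-1472)*α*β^5*X^8 + (-1152)*α*β^5*X^8*s^2 + 640*α*β^5*X^9 + (-896)*α*β^6*X^6*s + 2880*α*β^6*X^7*s + (-1408)*α*β^6*X^8*s + (-256)*α*β^7*X^6 + 960*α*β^7*X^7 + (-576)*α*β^7*X^8 + (-32)*α^2*X^7*s^4 + 32*α^2*X^8*s^4 + (-576)*α^2*β*X^7*s^3 + 576*α^2*β*X^8*s^3 + 192*α^2*β^2*X^6*s^4 + (-2304)*α^2*β^2*X^7*s^2 + (-320)*α^2*β^2*X^7*s^4 + 3328*α^2*β^2*X^8*s^2 + 128*α^2*β^2*X^8*s^4 + (-256)*α^2*β^2*X^9*s^2 + 1280*α^2*β^3*X^6*s^3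 + (-3200)*α^2*β^3*X^7*s + (-3072)*α^2*β^3*X^7*s^3 + 6528*α^2*β^3*X^8*s + 1152*α^2*β^3*X^8*s^3 + (-2304)*α^2*β^3*X^9*s + 2880*α^2*β^4*X^6*s^2 + (-1440)*α^2*β^4*X^7 + (-8832)*α^2*β^4*X^7*s^2 + (-32)*α^2*β^4*X^7*s^4 + 3872*α^2*β^4*X^8 + 4864*α^2*β^4*X^8*s^2 + 32*α^2*β^4*X^8*s^4 + (-2560)*α^2*β^4*X^9 + (-256)*α^2*β^4*X^9*s^2 + 512*α^2*β^4*X^10 + 2688*α^2*β^5*X^6*s + (-9920)*α^2*β^5*X^7*s + (-192)*α^2*β^5*X^7*s^3 + 7552*α^2*β^5*X^8*s + 192*α^2*β^5*X^8*s^3 + (-1536)*α^2*β^5*X^9*s + 896*α^2*β^6*X^6 + (-3840)*α^2*β^6*X^7 + (-384)*α^2*β^6*X^7*s^2 + 3712*α^2*β^6*X^8 + 512*α^2*β^6*X^8*s^2 + (-1280)*α^2*β^6*X^9 + (-320)*α^2*β^7*X^7*s + 576*α^2*β^7*X^8*s + (-96)*α^2*β^8*X^7 + 224*α^2*β^8*X^8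 + 192*α^3*X^7*s^3 + (-192)*α^3*X^8*s^3 + (-128)*α^3*β*X^6*s^4 + 1536*α^3*β*X^7*s^2 + 192*α^3*β*X^7*s^4 + (-2176)*α^3*β*X^8*s^2 + (-64)*α^3*β*X^8*s^4 + 128*α^3*β*X^9*s^2 + (-1280)*α^3*β^2*X^6*s^3 + 3200*α^3*β^2*X^7*s + 3072*α^3*β^2*X^7*s^3 + (-6528)*α^3*β^2*X^8*s + (-1152)*α^3*β^2*X^8*s^3 + 2304*α^3*β^2*X^9*s + (-3840)*α^3*β^3*X^6*s^2 + 1920*α^3*β^3*X^7 + 12288*α^3*β^3*X^7*s^2 + 64*α^3*β^3*X^7*s^4 + (-5248)*α^3*β^3*X^8 + (-7424)*α^3*β^3*X^8*s^2 + (-64)*α^3*β^3*X^8*s^4 + 3840*α^3*β^3*X^9 + 512*α^3*β^3*X^9*s^2 + (-1024)*α^3*β^3*X^10 + (-4480)*α^3*β^4*X^6*s + 17600*α^3*β^4*X^7*s + 576*α^3*β^4*X^7*s^3 + (-15616)*α^3*β^4*X^8*s + (-576)*α^3*β^4*X^8*s^3 + 4608*α^3*β^4*X^9*s + (-1792)*α^3*β^5*X^6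 + 8256*α^3*β^5*X^7 + 1536*α^3*β^5*X^7*s^2 + (-9664)*α^3*β^5*X^8 + (-2176)*α^3*β^5*X^8*s^2 + 5120*α^3*β^5*X^9 + 128*α^3*β^5*X^9*s^2 + (-1024)*α^3*β^5*X^10 + 1600*α^3*β^6*X^7*s + (-3136)*α^3*β^6*X^8*s + 768*α^3*β^6*X^9*s + 576*α^3*β^7*X^7 + (-1472)*α^3*β^7*X^8 + 640*α^3*β^7*X^9 + 32*α^4*X^6*s^4 + (-384)*α^4*X^7*s^2 + (-32)*α^4*X^7*s^4 + 512*α^4*X^8*s^2 + 640*α^4*β*X^6*s^3 + (-1600)*α^4*β*X^7*s + (-1344)*α^4*β*X^7*s^3 + 3136*α^4*β*X^8*s + 384*α^4*β*X^8*s^3 + (-768)*α^4*β*X^9*s + 2880*α^4*β^2*X^6*s^2 + (-1440)*α^4*β^2*X^7 + (-8832)*α^4*β^2*X^7*s^2 + (-32)*α^4*β^2*X^7*s^4 + 3872*α^4*β^2*X^8 + 4864*α^4*β^2*X^8*s^2 + 32*α^4*β^2*X^8*s^4 + (-2560)*α^4*β^2*X^9 + (-256)*α^4*β^2*X^9*s^2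 + 512*α^4*β^2*X^10 + 4480*α^4*β^3*X^6*s + (-17600)*α^4*β^3*X^7*s + (-576)*α^4*β^3*X^7*s^3 + 15616*α^4*β^3*X^8*s + 576*α^4*β^3*X^8*s^3 + (-4608)*α^4*β^3*X^9*s + 2240*α^4*β^4*X^6 + (-10560)*α^4*β^4*X^7 + (-2304)*α^4*β^4*X^7*s^2 + 13056*α^4*β^4*X^8 + 3328*α^4*β^4*X^8*s^2 + (-7680)*α^4*β^4*X^9 + (-256)*α^4*β^4*X^9*s^2 + 2048*α^4*β^4*X^10 + (-3200)*α^4*β^5*X^7*s + 6528*α^4*β^5*X^8*s + (-2304)*α^4*β^5*X^9*s + (-1440)*α^4*β^6*X^7 + 3872*α^4*β^6*X^8 + (-2560)*α^4*β^6*X^9 + 512*α^4*β^6*X^10 + (-128)*α^5*X^6*s^3 + 320*α^5*X^7*s + 192*α^5*X^7*s^3 + (-576)*α^5*X^8*s + (-1152)*α^5*β*X^6*s^2 + 576*α^5*β*X^7 + 3072*α^5*β*X^7*s^2 + (-1472)*α^5*β*X^8 + (-1152)*α^5*β*X^8*s^2 + 640*α^5*β*X^9 + (-2688)*α^5*β^2*X^6*s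 + 9920*α^5*β^2*X^7*s + 192*α^5*β^2*X^7*s^3 + (-7552)*α^5*β^2*X^8*s + (-192)*α^5*β^2*X^8*s^3 + 1536*α^5*β^2*X^9*s + (-1792)*α^5*β^3*X^6 + 8256*α^5*β^3*X^7 + 1536*α^5*β^3*X^7*s^2 + (-9664)*α^5*β^3*X^8 + (-2176)*α^5*β^3*X^8*s^2 + 5120*α^5*β^3*X^9 + 128*α^5*β^3*X^9*s^2 + (-1024)*α^5*β^3*X^10 + 3200*α^5*β^4*X^7*s + (-6528)*α^5*β^4*X^8*s + 2304*α^5*β^4*X^9*s + 1920*α^5*β^5*X^7 + (-5248)*α^5*β^5*X^8 + 3840*α^5*β^5*X^9 + (-1024)*α^5*β^5*X^10 + 192*α^6*X^6*s^2 + (-96)*α^6*X^7 + (-384)*α^6*X^7*s^2 + 224*α^6*X^8 + 896*α^6*β*X^6*s + (-2880)*α^6*β*X^7*s + 1408*α^6*β*X^8*s + 896*α^6*β^2*X^6 + (-3840)*α^6*β^2*X^7 + (-384)*α^6*β^2*X^7*s^2 + 3712*α^6*β^2*X^8 + 512*α^6*β^2*X^8*s^2 + (-1280)*α^6*β^2*X^9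 + (-1600)*α^6*β^3*X^7*s + 3136*α^6*β^3*X^8*s + (-768)*α^6*β^3*X^9*s + (-1440)*α^6*β^4*X^7 + 3872*α^6*β^4*X^8 + (-2560)*α^6*β^4*X^9 + 512*α^6*β^4*X^10 + (-128)*α^7*X^6*s + 320*α^7*X^7*s + (-256)*α^7*β*X^6 + 960*α^7*β*X^7 + (-576)*α^7*β*X^8 + 320*α^7*β^2*X^7*s + (-576)*α^7*β^2*X^8*s + 576*α^7*β^3*X^7 + (-1472)*α^7*β^3*X^8 + 640*α^7*β^3*X^9 + 32*α^8*X^6 + (-96)*α^8*X^7 + (-96)*α^8*β^2*X^7 + 224*α^8*β^2*X^8) * hs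
  · show (α * β + (α - β) * (α - β + s) / (2 * X)) * (α * β + (α - β) * (α - β - s) / (2 * X)) = α^2 * β^2
    field_simp
    linear_combination (-(α-β)^2) * hs
  · show (α - β)^2 * (α * β + (α - β) * (α - β + s) / (2 * X)) / ((α * β + (α - β) * (α - β + s) / (2 * X)) - α * β)^2 = X
    have hd : α - β ≠ 0 := by
      intro h; exact hαβ (by linear_combination (α+β) * h)
    have hden : (α * β + (α - β) * (α - β + s) / (2 * X)) - α * β ≠ 0 := by
      have : (α * β + (α - β) * (α - β + s) / (2 * X)) - α * β = (α - β) * (α - β + s) / (2 * X) := by ring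
      rw [this]
      exact div_ne_zero (mul_ne_zero hd hps) (by simp [hX])
    rw [div_eq_iff (pow_ne_zero 2 hden)]
    field_simp
    linear_combination (-(α-β)^2) * hs
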